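/- arXiv:2501.10540 — 3 statements merged into one kernel-verified Lean document; each statement's English description precedes it below -/
import Mathlib

section
/- Let σ₁₁ > 0, σ₂₂ > 0, and let A, s₁₁, s₁₂, s₂₂, C be real numbers. For t ∈ ℝ with t² < σ₁₁σ₂₂, define η(t) = C − (A/2) log(σ₂₂ − t²/σ₁₁) − (s₂₂ − 2(t/σ₁₁) s₁₂ + (t²/σ₁₁²) s₁₁) / (2(σ₂₂ − t²/σ₁₁)), and define the cubic polynomial P(t) = s₁₂ σ₁₁ σ₂₂ + (σ₁₁ σ₂₂ A − s₂₂ σ₁₁ − s₁₁ σ₂₂) t + s₁₂ t² − A t³. Then for every t with t² < σ₁₁σ₂₂, η is differentiable at t and η′(t) = P(t) / (σ₁₁ σ₂₂ − t²)². -/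
open Real

/-- Derivative of the profile log-likelihood `η` of Theorems 1–4: on the
positive-definiteness region `t² < σ₁₁σ₂₂`, `η` is differentiable with
`η′(t) = P(t) / (σ₁₁σ₂₂ − t²)²`, where `P` is the cubic polynomial of the paper. -/
theorem deriv_eta_eq_P_div (σ11 σ22 A s11 s12 s22 C : ℝ)
    (h11 : 0 < σ11) (h22 : 0 < σ22) :
    ∀ t : ℝ, t ^ 2 < σ11 * σ22 →
      HasDerivAt (fun t : ℝ =>
          C - (A / 2) * Real.log (σ22 - t ^ 2 / σ11)
            - (s22 - 2 * (t / σ11) * s12 + (t ^ 2 / σ11 ^ 2) * s11)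
              / (2 * (σ22 - t ^ 2 / σ11)))
        ((s12 * σ11 * σ22 + (σ11 * σ22 * A - s22 * σ11 - s11 * σ22) * t
            + s12 * t ^ 2 - A * t ^ 3) / (σ11 * σ22 - t ^ 2) ^ 2) t := by
  intro t ht
  have hu : (0:ℝ) < σ22 - t ^ 2 / σ11 := by
    rw [sub_pos, div_lt_iff₀ h11]
    linarith [ht]
  have hu' : σ22 - t ^ 2 / σ11 ≠ 0 := ne_of_gt hu
  have hg : HasDerivAt (fun t : ℝ => σ22 - t ^ 2 / σ11) (-(2 * t / σ11)) t := by
    have := ((hasDerivAt_pow 2 t).div_const σ11).const_sub σ22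
    refine this.congr_deriv ?_
    ring
  have hN : HasDerivAt (fun t : ℝ =>
      s22 - 2 * (t / σ11) * s12 + (t ^ 2 / σ11 ^ 2) * s11)
      (-(2 / σ11 * s12) + 2 * t / σ11 ^ 2 * s11) t := by
    have h1 : HasDerivAt (fun t : ℝ => s22 - 2 * (t / σ11) * s12)
        (-(2 / σ11 * s12)) t := by
      have := (((hasDerivAt_id t).div_const σ11).const_mul 2).mul_const s12
      have := this.const_sub s22
      refine this.congr_deriv ?_
      ring
    have h2 : HasDerivAt (fun t : ℝ => (t ^ 2 / σ11 ^ 2) * s11)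
        (2 * t / σ11 ^ 2 * s11) t := by
      have := ((hasDerivAt_pow 2 t).div_const (σ11 ^ 2)).mul_const s11
      refine this.congr_deriv ?_
      ring
    exact h1.add h2
  have hlog : HasDerivAt (fun t : ℝ => Real.log (σ22 - t ^ 2 / σ11))
      (-(2 * t / σ11) / (σ22 - t ^ 2 / σ11)) t := hg.log hu'
  have hden : HasDerivAt (fun t : ℝ => 2 * (σ22 - t ^ 2 / σ11))
      (2 * -(2 * t / σ11)) t := hg.const_mul 2
  have hden' : 2 * (σ22 - t ^ 2 / σ11) ≠ 0 := by positivity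
  have hfrac := hN.div hden hden'
  have hmain := ((hlog.const_mul (A / 2)).const_sub C).sub hfrac
  refine hmain.congr_deriv ?_
  have h11' : σ11 ≠ 0 := ne_of_gt h11
  have hd : σ11 * σ22 - t ^ 2 ≠ 0 := by
    have : 0 < σ11 * σ22 - t ^ 2 := by linarith [ht]
    exact ne_of_gt this
  have key : σ22 - t ^ 2 / σ11 = (σ11 * σ22 - t ^ 2) / σ11 := by
    field_simp
  rw [key]
  field_simp
  ring
end

section
/- Let σ₁₁ > 0, σ₂₂ > 0, and let A, s₁₁, s₁₂, s₂₂, C be real numbers. For t ∈ ℝ with t² < σ₁₁σ₂₂, define η(t) = C − (A/2) log(σ₂₂ − t²/σ₁₁) − (s₂₂ − 2(t/σ₁₁) s₁₂ + (t²/σ₁₁²) s₁₁) / (2(σ₂₂ − t²/σ₁₁)), and define the cubic polynomial P(t) = s₁₂ σ₁₁ σ₂₂ + (σ₁₁ σ₂₂ A − s₂₂ σ₁₁ − s₁₁ σ₂₂) t + s₁₂ t² − A t³. Then for every t ∈ (−√(σ₁₁σ₂₂), √(σ₁₁σ₂₂)), η′(t) = 0 if and only if P(t) = 0. In particular, the stationary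 points of η inside the positive-definiteness region are exactly the roots of P lying in that interval. -/
open Real

/-- Theorems 2 and 4 of the paper: inside the positive-definiteness region
`t ∈ (−√(σ₁₁σ₂₂), √(σ₁₁σ₂₂))`, the stationary points of the profile log-likelihood `η`
are exactly the roots of the cubic polynomial `P`. -/
theorem eta_stationary_iff_P_root (σ11 σ22 A s11 s12 s22 C : ℝ)
    (h11 : 0 < σ11) (h22 : 0 < σ22) :
    ∀ t : ℝ, -Real.sqrt (σ11 * σ22) < t → t < Real.sqrt (σ11 * σ22) →
      (deriv (fun t : ℝ =>
          C - (A / 2) * Real.log (σ22 - t ^ 2 / σ11)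
            - (s22 - 2 * (t / σ11) * s12 + (t ^ 2 / σ11 ^ 2) * s11)
              / (2 * (σ22 - t ^ 2 / σ11))) t = 0
        ↔ s12 * σ11 * σ22 + (σ11 * σ22 * A - s22 * σ11 - s11 * σ22) * t
            + s12 * t ^ 2 - A * t ^ 3 = 0) := by
  intro t ht1 ht2
  have hprod : 0 < σ11 * σ22 := mul_pos h11 h22
  have htsq : t ^ 2 < σ11 * σ22 := by
    have habs : |t| < Real.sqrt (σ11 * σ22) := abs_lt.mpr ⟨ht1, ht2⟩
    calc t ^ 2 = |t| ^ 2 := (sq_abs t).symm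
    _ < Real.sqrt (σ11 * σ22) ^ 2 := by
        exact pow_lt_pow_left₀ habs (abs_nonneg t) (by norm_num)
    _ = σ11 * σ22 := Real.sq_sqrt hprod.le
  have hu : 0 < σ22 - t ^ 2 / σ11 := by
    rw [sub_pos, div_lt_iff₀ h11]
    linarith [htsq]
  have hune : σ22 - t ^ 2 / σ11 ≠ 0 := ne_of_gt hu
  -- derivative of u
  have hU : HasDerivAt (fun x : ℝ => σ22 - x ^ 2 / σ11) (-(2 * t / σ11)) t := by
    have : HasDerivAt (fun x : ℝ => x ^ 2 / σ11) (2 * t / σ11) t := by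
      have := (hasDerivAt_pow 2 t).div_const σ11
      simpa using this
    exact ((hasDerivAt_const t σ22).sub this).congr_deriv (by ring)
  have hL : HasDerivAt (fun x : ℝ => Real.log (σ22 - x ^ 2 / σ11))
      ((-(2 * t / σ11)) / (σ22 - t ^ 2 / σ11)) t := hU.log hune
  have hN : HasDerivAt
      (fun x : ℝ => s22 - 2 * (x / σ11) * s12 + (x ^ 2 / σ11 ^ 2) * s11)
      (-(2 / σ11 * s12) + 2 * t / σ11 ^ 2 * s11) t := by
    have h1 : HasDerivAt (fun x : ℝ => 2 * (x / σ11) * s12) (2 / σ11 * s12) t := by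
      have h := (hasDerivAt_id t).const_mul (2 / σ11 * s12)
      have heq : (fun x : ℝ => 2 * (x / σ11) * s12) = fun x : ℝ => 2 / σ11 * s12 * x := by
        funext x; ring
      rw [heq]
      simpa using h
    have h2 : HasDerivAt (fun x : ℝ => (x ^ 2 / σ11 ^ 2) * s11)
        (2 * t / σ11 ^ 2 * s11) t := by
      have := ((hasDerivAt_pow 2 t).div_const (σ11 ^ 2)).mul_const s11
      simpa using this
    exact (((hasDerivAt_const t s22).sub h1).add h2).congr_deriv (by ring)
  have hD : HasDerivAt (fun x : ℝ => 2 * (σ22 - x ^ 2 / σ11)) (2 * (-(2 * t / σ11))) t :=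
    hU.const_mul 2
  have hDne : 2 * (σ22 - t ^ 2 / σ11) ≠ 0 := by positivity
  have hQ := hN.div hD hDne
  have hF : HasDerivAt (fun x : ℝ =>
      C - (A / 2) * Real.log (σ22 - x ^ 2 / σ11)
        - (s22 - 2 * (x / σ11) * s12 + (x ^ 2 / σ11 ^ 2) * s11)
          / (2 * (σ22 - x ^ 2 / σ11)))
      ((s12 * σ11 * σ22 + (σ11 * σ22 * A - s22 * σ11 - s11 * σ22) * t
            + s12 * t ^ 2 - A * t ^ 3) / ((σ11 * σ22 - t ^ 2) ^ 2)) t := by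
    have := ((hasDerivAt_const t C).sub (hL.const_mul (A / 2))).sub hQ
    refine this.congr_deriv ?_
    have h11' : σ11 ≠ 0 := ne_of_gt h11
    have hk : σ11 * σ22 - t ^ 2 ≠ 0 := ne_of_gt (by linarith)
    rw [show σ22 - t ^ 2 / σ11 = (σ11 * σ22 - t ^ 2) / σ11 from by field_simp]
    field_simp
    ring
  rw [hF.deriv]
  constructor
  · intro h
    have hden : (σ11 * σ22 - t ^ 2) ^ 2 ≠ 0 := pow_ne_zero _ (ne_of_gt (by linarith))
    exact (div_eq_zero_iff.mp h).resolve_right hden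
  · intro h
    rw [h, zero_div]
end

section
/- Let σ₁₁ > 0, σ₂₂ > 0, and let A, s₁₁, s₁₂, s₂₂, C be real numbers. For t ∈ ℝ with t² < σ₁₁σ₂₂, define η(t) = C − (A/2) log(σ₂₂ − t²/σ₁₁) − (s₂₂ − 2(t/σ₁₁) s₁₂ + (t²/σ₁₁²) s₁₁) / (2(σ₂₂ − t²/σ₁₁)), and define P(t) = s₁₂ σ₁₁ σ₂₂ + (σ₁₁ σ₂₂ A − s₂₂ σ₁₁ − s₁₁ σ₂₂) t + s₁₂ t² − A t³. If t* ∈ (−√(σ₁₁σ₂₂), √(σ₁₁σ₂₂)) satisfies η(t*) ≥ η(t) for all t ∈ (−√(σ₁₁σ₂₂), √(σ₁₁σ₂₂)), then P(t*) = 0. -/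
open Real

/-- Theorems 2 and 4 of the paper ("estimation of σ₁₂ reduces to finding the roots of
P"): any maximizer `t*` of the profile log-likelihood `η` over the open interval
`(−√(σ₁₁σ₂₂), √(σ₁₁σ₂₂))` of off-diagonal entries for which the covariance matrix is
positive definite must be a root of the cubic polynomial `P`. -/
theorem maximizer_is_root_of_P (σ11 σ22 A s11 s12 s22 C : ℝ)
    (h11 : 0 < σ11) (h22 : 0 < σ22) (tstar : ℝ)
    (h1 : -Real.sqrt (σ11 * σ22) < tstar) (h2 : tstar < Real.sqrt (σ11 * σ22))
    (hmax : ∀ t : ℝ, -Real.sqrt (σ11 * σ22) < t → t < Real.sqrt (σ11 * σ22) →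
      (C - (A / 2) * Real.log (σ22 - t ^ 2 / σ11)
          - (s22 - 2 * (t / σ11) * s12 + (t ^ 2 / σ11 ^ 2) * s11)
            / (2 * (σ22 - t ^ 2 / σ11)))
        ≤ C - (A / 2) * Real.log (σ22 - tstar ^ 2 / σ11)
          - (s22 - 2 * (tstar / σ11) * s12 + (tstar ^ 2 / σ11 ^ 2) * s11)
            / (2 * (σ22 - tstar ^ 2 / σ11))) :
    s12 * σ11 * σ22 + (σ11 * σ22 * A - s22 * σ11 - s11 * σ22) * tstar
      + s12 * tstar ^ 2 - A * tstar ^ 3 = 0 := by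
  set f : ℝ → ℝ := fun t =>
    C - (A / 2) * Real.log (σ22 - t ^ 2 / σ11)
      - (s22 - 2 * (t / σ11) * s12 + (t ^ 2 / σ11 ^ 2) * s11)
        / (2 * (σ22 - t ^ 2 / σ11)) with hf
  -- positivity of the denominator
  have hsq : tstar ^ 2 < σ11 * σ22 := by
    have habs : |tstar| < Real.sqrt (σ11 * σ22) := abs_lt.mpr ⟨h1, h2⟩
    have h := sq_lt_sq' h1 h2
    have : Real.sqrt (σ11 * σ22) ^ 2 = σ11 * σ22 :=
      Real.sq_sqrt (mul_nonneg h11.le h22.le)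
    linarith
  have hu : 0 < σ22 - tstar ^ 2 / σ11 := by
    rw [sub_pos, div_lt_iff₀ h11]
    linarith [hsq]
  have hune : σ22 - tstar ^ 2 / σ11 ≠ 0 := hu.ne'
  -- derivative of the inner function u
  have hu' : HasDerivAt (fun t : ℝ => σ22 - t ^ 2 / σ11)
      (-((2 * tstar ^ 1) / σ11)) tstar := by
    exact ((hasDerivAt_const tstar σ22).sub ((hasDerivAt_pow 2 tstar).div_const σ11)).congr_deriv (by norm_num)
  -- derivative of the numerator N
  have hN : HasDerivAt (fun t : ℝ => s22 - 2 * (t / σ11) * s12 + (t ^ 2 / σ11 ^ 2) * s11)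
      (-(2 * (1 / σ11) * s12) + (2 * tstar ^ 1 / σ11 ^ 2) * s11) tstar := by
    have hA : HasDerivAt (fun t : ℝ => s22 - 2 * (t / σ11) * s12)
        (-(2 * (1 / σ11) * s12)) tstar := by
      exact ((hasDerivAt_const tstar s22).sub
        ((((hasDerivAt_id tstar).div_const σ11).const_mul 2).mul_const s12)).congr_deriv (by norm_num)
    have hB : HasDerivAt (fun t : ℝ => (t ^ 2 / σ11 ^ 2) * s11)
        ((2 * tstar ^ 1 / σ11 ^ 2) * s11) tstar := by
      simpa using (((hasDerivAt_pow 2 tstar).div_const (σ11 ^ 2)).mul_const s11)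
    exact hA.add hB
  -- derivative of f
  have hlog : HasDerivAt (fun t : ℝ => Real.log (σ22 - t ^ 2 / σ11))
      ((-((2 * tstar ^ 1) / σ11)) / (σ22 - tstar ^ 2 / σ11)) tstar := hu'.log hune
  have hden : HasDerivAt (fun t : ℝ => 2 * (σ22 - t ^ 2 / σ11))
      (2 * -((2 * tstar ^ 1) / σ11)) tstar := hu'.const_mul 2
  have hdivne : (2 : ℝ) * (σ22 - tstar ^ 2 / σ11) ≠ 0 := by positivity
  have hdiv : HasDerivAt (fun t : ℝ =>
      (s22 - 2 * (t / σ11) * s12 + (t ^ 2 / σ11 ^ 2) * s11) / (2 * (σ22 - t ^ 2 / σ11)))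
      (((-(2 * (1 / σ11) * s12) + (2 * tstar ^ 1 / σ11 ^ 2) * s11)
          * (2 * (σ22 - tstar ^ 2 / σ11))
        - (s22 - 2 * (tstar / σ11) * s12 + (tstar ^ 2 / σ11 ^ 2) * s11)
          * (2 * -((2 * tstar ^ 1) / σ11)))
        / (2 * (σ22 - tstar ^ 2 / σ11)) ^ 2) tstar := hN.div hden hdivne
  have hf' : HasDerivAt f
      (0 - (A / 2) * ((-((2 * tstar ^ 1) / σ11)) / (σ22 - tstar ^ 2 / σ11))
        - (((-(2 * (1 / σ11) * s12) + (2 * tstar ^ 1 / σ11 ^ 2) * s11)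
            * (2 * (σ22 - tstar ^ 2 / σ11))
          - (s22 - 2 * (tstar / σ11) * s12 + (tstar ^ 2 / σ11 ^ 2) * s11)
            * (2 * -((2 * tstar ^ 1) / σ11)))
          / (2 * (σ22 - tstar ^ 2 / σ11)) ^ 2)) tstar := by
    exact ((hasDerivAt_const tstar C).sub (hlog.const_mul (A / 2))).sub hdiv
  -- local max
  have hloc : IsLocalMax f tstar := by
    have hmem : Set.Ioo (-Real.sqrt (σ11 * σ22)) (Real.sqrt (σ11 * σ22)) ∈ nhds tstar :=
      Ioo_mem_nhds h1 h2
    filter_upwards [hmem] with t ht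
    exact hmax t ht.1 ht.2
  have hD0 := hloc.hasDerivAt_eq_zero hf'
  have h11ne : σ11 ≠ 0 := h11.ne'
  have hne2 : σ22 * σ11 - tstar ^ 2 ≠ 0 := by
    have : 0 < σ22 * σ11 - tstar ^ 2 := by nlinarith [hsq]
    exact this.ne'
  field_simp [h11ne, hne2] at hD0
  have hne3 : σ11 * σ22 - tstar ^ 2 ≠ 0 := by
    have : 0 < σ11 * σ22 - tstar ^ 2 := by nlinarith [hsq]
    exact this.ne'
  have e : σ11 * (s12 * σ11 * σ22 + (σ11 * σ22 * A - s22 * σ11 - s11 * σ22) * tstar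
        + s12 * tstar ^ 2 - A * tstar ^ 3) = (σ11 * σ22 - tstar ^ 2) ^ 2 *
      ((σ11 * (0 - -(A * tstar / (σ11 * σ22 - tstar ^ 2))) -
        ((σ11 * σ22 - tstar ^ 2) * (-(σ11 * s12) + tstar * s11) -
          -(tstar * (σ11 * (σ11 * s22 - 2 * tstar * s12) + tstar ^ 2 * s11))) /
          (σ11 * σ22 - tstar ^ 2) ^ 2) - 0 * σ11) := by
    field_simp
    ring
  have key : (8 * σ11 ^ 5 * (σ22 * σ11 - tstar ^ 2)) *
      (s12 * σ11 * σ22 + (σ11 * σ22 * A - s22 * σ11 - s11 * σ22) * tstar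
        + s12 * tstar ^ 2 - A * tstar ^ 3) = 0 := by
    linear_combination (8 * σ11 ^ 4 * (σ22 * σ11 - tstar ^ 2)) * e
      + (8 * σ11 ^ 4 * (σ22 * σ11 - tstar ^ 2) * (σ11 * σ22 - tstar ^ 2) ^ 2) * hD0
  have hfac : (8 : ℝ) * σ11 ^ 5 * (σ22 * σ11 - tstar ^ 2) ≠ 0 := by
    apply mul_ne_zero (mul_ne_zero (by norm_num) (pow_ne_zero 5 h11ne)) hne2
  exact (mul_eq_zero.mp key).resolve_left hfac
end
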